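/- If F = (A, R) is a finitary argumentation framework, then there exists a well-ordering < of A such that every argument a ∈ A attacks only finitely many arguments b with b < a (i.e., for each a the set {b ∈ A | a ↦ b and b < a} is finite). -/

import Mathlib

/-!
Basic notions of abstract argumentation frameworks, following
Andrews–San Mauro, "SCC-recursiveness in infinite argumentation".
-/

universe u

/-- An argumentation framework: a set `A` of arguments together with an
attack relation `R ⊆ A × A`. -/
structure AF (α : Type u) where
  A : Set α
  R : α → α → Prop
  attack_mem : ∀ ⦃a b : α⦄, R a b → a ∈ A ∧ b ∈ A

namespace AF

variable {α : Type u}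

/-- The restriction `F↾U = (A ∩ U, R ∩ (U × U))`. -/
def restrict (F : AF α) (U : Set α) : AF α where
  A := F.A ∩ U
  R a b := F.R a b ∧ a ∈ U ∧ b ∈ U
  attack_mem := by
    intro a b h
    exact ⟨⟨(F.attack_mem h.1).1, h.2.1⟩, ⟨(F.attack_mem h.1).2, h.2.2⟩⟩

/-- `S` is conflict-free: `S ⊆ A` and no argument of `S` attacks another. -/
def ConflictFree (F : AF α) (S : Set α) : Prop :=
  S ⊆ F.A ∧ ∀ a ∈ S, ∀ b ∈ S, ¬ F.R a b

/-- `S` is a naive extension: conflict-free and ⊆-maximal among conflict-free sets. -/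
def Naive (F : AF α) (S : Set α) : Prop :=
  ConflictFree F S ∧ ∀ T, ConflictFree F T → S ⊆ T → S = T

/-- `S⁺`: the set of arguments attacked by `S`. -/
def plus (F : AF α) (S : Set α) : Set α := {x | ∃ y ∈ S, F.R y x}

/-- The range `S⊕ = S ∪ S⁺`. -/
def rng (F : AF α) (S : Set α) : Set α := S ∪ plus F S

/-- `S` is a stage extension: conflict-free with ⊆-maximal range among
conflict-free sets. -/
def Stage (F : AF α) (S : Set α) : Prop :=
  ConflictFree F S ∧ ¬ ∃ T, ConflictFree F T ∧ rng F S ⊂ rng F T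

/-- `F` is finitary: every argument has finitely many attackers. -/
def Finitary (F : AF α) : Prop := ∀ a, {x | F.R x a}.Finite

/-- There is a directed path from `a` to `b` in `F` (both being arguments of `F`). -/
def Reach (F : AF α) (a b : α) : Prop :=
  a ∈ F.A ∧ b ∈ F.A ∧ Relation.ReflTransGen F.R a b

/-- The strongly connected component of `a` in `F`. -/
def SCCof (F : AF α) (a : α) : Set α := {b | Reach F a b ∧ Reach F b a}

/-- `X` is a strongly connected component of `F`. -/
def IsSCC (F : AF α) (X : Set α) : Prop := ∃ a ∈ F.A, X = SCCof F a

/-- `D_S(X)`: the elements of `X` attacked by an element of `S` outside `X`. -/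
def Dset (F : AF α) (S X : Set α) : Set α := {b ∈ X | ∃ a ∈ S \ X, F.R a b}

/-- `S` is a cf1.5-extension of `F`. -/
def CF15 (F : AF α) (S : Set α) : Prop :=
  ConflictFree F S ∧
    ∀ X, IsSCC F X → Naive (F.restrict (X \ Dset F S X)) (S ∩ X)

/-- `S` is a stg1.5-extension of `F`. -/
def STG15 (F : AF α) (S : Set α) : Prop :=
  ConflictFree F S ∧
    ∀ X, IsSCC F X → Stage (F.restrict (X \ Dset F S X)) (S ∩ X)

/-- `C_S^α(a)`, defined by transfinite recursion. -/
noncomputable def Cseq (F : AF α) (S : Set α) (a : α) (o : Ordinal.{0}) : Set α :=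
  Ordinal.limitRecOn o (SCCof F a)
    (fun _ C => SCCof (F.restrict (C \ Dset F S C)) a)
    (fun o' _ ih => SCCof (F.restrict (⋂ β : {β : Ordinal.{0} // β < o'}, ih β.1 β.2)) a)

/-- The component ordinal `α_S(a)`: the least `α` with `a ∉ C_S^α(a)` or
`C_S^{α+1}(a) = C_S^α(a)`. -/
noncomputable def alphaS (F : AF α) (S : Set α) (a : α) : Ordinal.{0} :=
  sInf {o | a ∉ Cseq F S a o ∨ Cseq F S a (o + 1) = Cseq F S a o}

/-- `S` is an icft-extension (tfcf2-extension) of `F`. -/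
def ICFT (F : AF α) (S : Set α) : Prop :=
  ConflictFree F S ∧ ∀ a ∈ F.A,
    a ∉ Cseq F S a (alphaS F S a) ∨
      Naive (F.restrict (Cseq F S a (alphaS F S a))) (S ∩ Cseq F S a (alphaS F S a))

/-- `S` is an istgt-extension (tf-stg2-extension) of `F`. -/
def ISTGT (F : AF α) (S : Set α) : Prop :=
  ConflictFree F S ∧ ∀ a ∈ F.A,
    a ∉ Cseq F S a (alphaS F S a) ∨
      Stage (F.restrict (Cseq F S a (alphaS F S a))) (S ∩ Cseq F S a (alphaS F S a))

/-- The characteristic function `f_F`. -/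
def charF (F : AF α) (S : Set α) : Set α :=
  {x ∈ F.A | ∀ y, F.R y x → ∃ z ∈ S, F.R z y}

/-- `G` is the grounded extension of `F`: the least fixed point of `f_F`. -/
def IsGrounded (F : AF α) (G : Set α) : Prop :=
  charF F G = G ∧ ∀ T, charF F T = T → G ⊆ T

/-- `conf(F)`: the set of conflicting pairs of `F`. -/
def confl (F : AF α) : Set (α × α) := {p | F.R p.1 p.2 ∨ F.R p.2 p.1}

/-- The operator `Δ_{F,S}(D)`. -/
def DeltaOp (F : AF α) (S D : Set α) : Set α :=
  {a ∈ F.A | ∃ b ∈ S, F.R b a ∧ ¬ Reach (F.restrict (F.A \ D)) a b}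

/-- `Δ^α_{F,S}`, defined by transfinite recursion. -/
noncomputable def Deltaseq (F : AF α) (S : Set α) (o : Ordinal.{0}) : Set α :=
  Ordinal.limitRecOn o (∅ : Set α)
    (fun _ D => DeltaOp F S D)
    (fun o' _ ih => ⋃ β : {β : Ordinal.{0} // β < o'}, ih β.1 β.2)

/-- The least fixed point `Δ_{F,S}` of the monotone operator `Δ_{F,S}(·)`,
given by Knaster–Tarski as the intersection of all prefixed points. -/
def DeltaFix (F : AF α) (S : Set α) : Set α :=
  ⋂₀ {D | DeltaOp F S D ⊆ D}

end AF


section Statement0Aux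

variable {α : Type u}

/-- Attackers within the subtype are finite. -/
private lemma attackers_fin (F : AF α) (hF : AF.Finitary F) (b : ↥F.A) :
    {x : ↥F.A | F.R x.1 b.1}.Finite := by
  have h : {x : ↥F.A | F.R x.1 b.1} = Subtype.val ⁻¹' {x : α | F.R x b.1} := rfl
  rw [h]
  exact Set.Finite.preimage (Subtype.val_injective.injOn) (hF b.1)

private def gset (F : AF α) (a : ↥F.A) : ℕ → Set ↥F.A
  | 0 => {a}
  | n + 1 => gset F a n ∪ ⋃ b ∈ gset F a n, {x : ↥F.A | F.R x.1 b.1}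

private lemma gset_fin (F : AF α) (hF : AF.Finitary F) (a : ↥F.A) :
    ∀ n, (gset F a n).Finite := by
  intro n
  induction n with
  | zero => exact Set.finite_singleton a
  | succ n ih =>
    exact ih.union (Set.Finite.biUnion ih (fun b _ => attackers_fin F hF b))

private lemma cl_countable (F : AF α) (hF : AF.Finitary F) (a : ↥F.A) :
    {x : ↥F.A | Relation.ReflTransGen (fun b x => F.R x.1 b.1) a x}.Countable := by
  have hsub : {x : ↥F.A | Relation.ReflTransGen (fun b x => F.R x.1 b.1) a x} ⊆
      ⋃ n, gset F a n := by
    intro x hx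
    simp only [Set.mem_setOf_eq] at hx
    induction hx with
    | refl => exact Set.mem_iUnion.2 ⟨0, rfl⟩
    | tail _ hbc ih =>
      obtain ⟨n, hn⟩ := Set.mem_iUnion.1 ih
      refine Set.mem_iUnion.2 ⟨n + 1, Or.inr ?_⟩
      exact Set.mem_biUnion hn hbc
  exact Set.Countable.mono hsub
    (Set.countable_iUnion (fun n => (gset_fin F hF a n).countable))

end Statement0Aux

/-- every finitary AF admits a well-ordering of its arguments in
which each argument attacks only finitely many earlier arguments. -/
theorem statement0 {α : Type u} (F : AF α) (hF : AF.Finitary F) :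
    ∃ r : ↥F.A → ↥F.A → Prop, IsWellOrder ↥F.A r ∧
      ∀ a : ↥F.A, {b : ↥F.A | F.R a.1 b.1 ∧ r b a}.Finite := by
  classical
  set β := ↥F.A with hβ
  let E : β → β → Prop := fun b x => F.R x.1 b.1
  let cl : β → Set β := fun a => {x | Relation.ReflTransGen E a x}
  have hclcount : ∀ a, (cl a).Countable := fun a => cl_countable F hF a
  have hclmem : ∀ x, x ∈ cl x := fun x => Relation.ReflTransGen.refl
  have hclsucc : ∀ a x y, x ∈ cl a → F.R y.1 x.1 → y ∈ cl a := by
    intro a x y hx hxy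
    exact Relation.ReflTransGen.tail hx hxy
  let w : β → β → Prop := WellOrderingRel
  have hwo : IsWellOrder β w := WellOrderingRel.isWellOrder
  have wf : WellFounded w := hwo.toIsWellFounded.wf
  have hSne : ∀ x : β, x ∈ {a | x ∈ cl a} := fun x => hclmem x
  let blk : β → β := fun x => wf.min {a | x ∈ cl a} ⟨x, hSne x⟩
  have hblk_mem : ∀ x, x ∈ cl (blk x) := fun x => wf.min_mem _ ⟨x, hSne x⟩
  have hblk_min : ∀ x a, x ∈ cl a → ¬ w a (blk x) := by
    intro x a ha
    exact wf.not_lt_min {b | x ∈ cl b} ha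
  -- choose injections
  have hex : ∀ a : β, ∃ g : β → ℕ, Set.InjOn g (cl a) :=
    fun a => Set.countable_iff_exists_injOn.mp (hclcount a)
  choose f hf using hex
  let key : β → β × ℕ := fun x => (blk x, f (blk x) x)
  have keyinj : Function.Injective key := by
    intro x y hxy
    have h1 : blk x = blk y := congrArg Prod.fst hxy
    have h2 : f (blk x) x = f (blk y) y := congrArg Prod.snd hxy
    rw [← h1] at h2
    exact hf (blk x) (hblk_mem x) (h1 ▸ hblk_mem y) h2
  let r : β → β → Prop := fun x y => Prod.Lex w (· < ·) (key x) (key y)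
  have emb : r ↪r Prod.Lex w (· < ·) := ⟨⟨key, keyinj⟩, Iff.rfl⟩
  refine ⟨r, emb.isWellOrder, ?_⟩
  intro a
  -- key fact: if a attacks b and r b a then blk b = blk a and f (blk a) b < f (blk a) a
  have hmain : {b : β | F.R a.1 b.1 ∧ r b a} ⊆
      {b : β | b ∈ cl (blk a) ∧ f (blk a) b < f (blk a) a} := by
    intro b ⟨hatt, hr⟩
    have hacl : a ∈ cl (blk b) := hclsucc (blk b) b a (hblk_mem b) hatt
    have hnot : ¬ w (blk b) (blk a) := hblk_min a (blk b) hacl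
    rcases Prod.lex_iff.mp hr with h | ⟨h1, h2⟩
    · exact absurd h hnot
    · have h1' : blk b = blk a := h1
      refine ⟨h1' ▸ hblk_mem b, ?_⟩
      have : f (blk b) b < f (blk a) a := h2
      rwa [h1'] at this
  refine Set.Finite.subset ?_ hmain
  have himg : (f (blk a) '' {b : β | b ∈ cl (blk a) ∧ f (blk a) b < f (blk a) a}).Finite := by
    apply Set.Finite.subset (Set.finite_Iio (f (blk a) a))
    rintro _ ⟨b, ⟨_, hb⟩, rfl⟩
    exact hb
  exact Set.Finite.of_finite_image himg
    ((hf (blk a)).mono (fun b hb => hb.1))
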